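/- arXiv:2406.07373 — 3 statements merged into one kernel-verified Lean document; each statement's English description precedes it below -/
import Mathlib

section
/- Let F : ℝ^d → ℝ be twice continuously differentiable and convex, and for α > 0 let x*_α be the unique minimizer of F(x) + (α/2)‖x‖², assumed to be a differentiable function of α satisfying the optimality condition ∇F(x*_α) = -α x*_α. Then for all 0 < α < α', ‖x*_{α'}‖ ≤ ‖x*_α‖, i.e., the norm of the regularized minimizer is nonincreasing in α. -/
/-- Monotonicity of the norm of the regularized minimizer: for twice continuously
differentiable convex `F`, with `x*_α` the unique minimizer of `F(x) + (α/2)‖x‖²`,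
differentiable in `α` and satisfying `∇F(x*_α) = -α x*_α`, the map `α ↦ ‖x*_α‖` is
nonincreasing on `(0, ∞)`. -/
theorem regularized_minimizer_norm_mono {d : ℕ} (F : EuclideanSpace ℝ (Fin d) → ℝ)
    (hF : ContDiff ℝ 2 F) (hconv : ConvexOn ℝ Set.univ F)
    (xc : ℝ → EuclideanSpace ℝ (Fin d))
    (hdiff : ∀ α, 0 < α → DifferentiableAt ℝ xc α)
    (hmin : ∀ α, 0 < α → ∀ y, F (xc α) + (α / 2) * ‖xc α‖ ^ 2 ≤ F y + (α / 2) * ‖y‖ ^ 2)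
    (huniq : ∀ α, 0 < α → ∀ y,
      F y + (α / 2) * ‖y‖ ^ 2 ≤ F (xc α) + (α / 2) * ‖xc α‖ ^ 2 → y = xc α)
    (hopt : ∀ α, 0 < α → gradient F (xc α) = -α • xc α) :
    ∀ α α', 0 < α → α < α' → ‖xc α'‖ ≤ ‖xc α‖ := by
  intro α α' hα hlt
  have hα' : 0 < α' := hα.trans hlt
  have h1 := hmin α hα (xc α')
  have h2 := hmin α' hα' (xc α)
  have hsq : ‖xc α'‖ ^ 2 ≤ ‖xc α‖ ^ 2 := by nlinarith [sub_pos.mpr hlt]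
  nlinarith [hsq, norm_nonneg (xc α), norm_nonneg (xc α')]
end

section
/- Let F : ℝ^d → ℝ be twice continuously differentiable and convex, and for α > 0 let x*_α minimize F(x) + (α/2)‖x‖², with the curve α ↦ x*_α differentiable and satisfying d/dα x*_α = -(∇²F(x*_α) + αI)^{-1} x*_α. Then for all 0 < α < α', ‖x*_α - x*_{α'}‖ ≤ ‖x*_α‖ · log(α'/α). -/
open Set Filter Topology

lemma monotone_hasDerivAt_nonneg {h : ℝ → ℝ} {c a : ℝ} (hm : Monotone h)
    (hd : HasDerivAt h c a) : 0 ≤ c := by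
  have ht : Filter.Tendsto (slope h a) (𝓝[>] a) (𝓝 c) :=
    (hasDerivAt_iff_tendsto_slope.1 hd).mono_left
      (nhdsWithin_mono a fun x hx => ne_of_gt hx)
  refine ge_of_tendsto ht ?_
  filter_upwards [self_mem_nhdsWithin] with s hs
  have : h a ≤ h s := hm (le_of_lt hs)
  have hsa : 0 < s - a := sub_pos.2 hs
  simp only [slope_def_field]
  rw [div_eq_inv_mul]
  exact mul_nonneg (inv_nonneg.2 hsa.le) (sub_nonneg.2 this)

/-- Log-stability of the regularized minimizer: for twice continuously differentiable
convex `F`, with `x*_α` minimizing `F(x) + (α/2)‖x‖²`, the curve `α ↦ x*_α` having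
derivative `D α` satisfying `(∇²F(x*_α) + αI) D α = -x*_α`, we have for `0 < α < α'`
that `‖x*_α - x*_{α'}‖ ≤ ‖x*_α‖ · log(α'/α)`. -/
theorem regularized_minimizer_log_stability {d : ℕ} (F : EuclideanSpace ℝ (Fin d) → ℝ)
    (hF : ContDiff ℝ 2 F) (hconv : ConvexOn ℝ Set.univ F)
    (xc : ℝ → EuclideanSpace ℝ (Fin d)) (D : ℝ → EuclideanSpace ℝ (Fin d))
    (hmin : ∀ α, 0 < α → ∀ y, F (xc α) + (α / 2) * ‖xc α‖ ^ 2 ≤ F y + (α / 2) * ‖y‖ ^ 2)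
    (hderiv : ∀ α, 0 < α → HasDerivAt xc (D α) α)
    (hDeq : ∀ α, 0 < α →
      (fderiv ℝ (gradient F) (xc α)) (D α) + α • D α = -xc α) :
    ∀ α α', 0 < α → α < α' → ‖xc α - xc α'‖ ≤ ‖xc α‖ * Real.log (α' / α) := by
  have one_le_two' : (1:ℕ∞) ≤ 2 := one_le_two
  have hFd : Differentiable ℝ F := hF.differentiable two_ne_zero
  -- differentiability of the gradient
  have hgd : Differentiable ℝ (gradient F) := by
    have h1 : ContDiff ℝ 1 (fderiv ℝ F) := hF.fderiv_right (by norm_num)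
    have : gradient F = fun y => (InnerProductSpace.toDual ℝ (EuclideanSpace ℝ (Fin d))).symm (fderiv ℝ F y) := rfl
    rw [this]
    exact fun y =>
      ((InnerProductSpace.toDual ℝ (EuclideanSpace ℝ (Fin d))).symm.toContinuousLinearEquiv.differentiableAt).comp y
        ((h1.differentiable one_ne_zero) y)
  -- PSD of the Hessian
  have psd : ∀ (x v : EuclideanSpace ℝ (Fin d)), 0 ≤ (inner ℝ (fderiv ℝ (gradient F) x v) v : ℝ) := by
    intro x v
    set h : ℝ → ℝ := fun s => (inner ℝ (gradient F (x + s • v)) v : ℝ) with hh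
    have hline : ∀ s : ℝ, HasDerivAt (fun s : ℝ => x + s • v) v s := by
      intro s
      simpa using ((hasDerivAt_id s).smul_const v).const_add x
    -- h s = deriv of g at s where g s = F (x + s • v)
    set g : ℝ → ℝ := fun s => F (x + s • v) with hg
    have hgd' : ∀ s, HasDerivAt g (h s) s := by
      intro s
      have := (hFd (x + s • v)).hasFDerivAt.comp_hasDerivAt s (hline s)
      refine this.congr_deriv ?_
      show _ = inner ℝ (gradient F (x + s • v)) v
      exact InnerProductSpace.toDual_symm_apply.symm
    have hgconv : ConvexOn ℝ Set.univ g := by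
      have hA : ConvexOn ℝ ((AffineMap.lineMap x (x + v) : ℝ →ᵃ[ℝ] (EuclideanSpace ℝ (Fin d))) ⁻¹' Set.univ)
          (F ∘ (AffineMap.lineMap x (x + v) : ℝ →ᵃ[ℝ] (EuclideanSpace ℝ (Fin d)))) :=
        hconv.comp_affineMap _
      have he : g = F ∘ (AffineMap.lineMap x (x + v) : ℝ →ᵃ[ℝ] (EuclideanSpace ℝ (Fin d))) := by
        funext s
        simp [hg, AffineMap.lineMap_apply, add_comm]
      rw [he]
      simpa using hA
    have hmono : Monotone h := by
      have := hgconv.monotoneOn_deriv (fun s _ => (hgd' s).differentiableAt)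
      intro a b hab
      have ha := (hgd' a).deriv
      have hb := (hgd' b).deriv
      rw [← ha, ← hb]
      exact this (mem_univ a) (mem_univ b) hab
    have hhd : HasDerivAt h (inner ℝ (fderiv ℝ (gradient F) x v) v : ℝ) 0 := by
      have h1 : HasDerivAt (fun s : ℝ => gradient F (x + s • v))
          (fderiv ℝ (gradient F) x v) 0 := by
        have := (hgd (x + (0:ℝ) • v)).hasFDerivAt.comp_hasDerivAt 0 (hline 0)
        simp only [zero_smul, add_zero] at this
        exact this
      have := h1.inner ℝ (hasDerivAt_const (0:ℝ) v)
      exact this.congr_deriv (by simp)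
    exact monotone_hasDerivAt_nonneg hmono hhd
  -- norm monotonicity
  have mono : ∀ a b, 0 < a → a ≤ b → ‖xc b‖ ≤ ‖xc a‖ := by
    intro a b ha hab
    rcases eq_or_lt_of_le hab with rfl | hlt
    · exact le_refl _
    have h1 := hmin a ha (xc b)
    have h2 := hmin b (ha.trans hlt) (xc a)
    have h3 : 0 ≤ (b - a) * (‖xc a‖ ^ 2 - ‖xc b‖ ^ 2) := by nlinarith [h1, h2]
    have hsq : ‖xc b‖ ^ 2 ≤ ‖xc a‖ ^ 2 := by nlinarith [h3, hlt]
    exact (pow_le_pow_iff_left₀ (norm_nonneg _) (norm_nonneg _) two_ne_zero).1 hsq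
  -- bound on the derivative
  have Dbound : ∀ t, 0 < t → ‖D t‖ ≤ ‖xc t‖ / t := by
    intro t ht
    have heq := hDeq t ht
    have hinner : (inner ℝ (fderiv ℝ (gradient F) (xc t) (D t) + t • D t) (D t) : ℝ)
        = inner ℝ (-xc t) (D t) := by rw [heq]
    rw [inner_add_left, real_inner_smul_left, real_inner_self_eq_norm_sq] at hinner
    have hcs : (inner ℝ (-xc t) (D t) : ℝ) ≤ ‖xc t‖ * ‖D t‖ := by
      calc (inner ℝ (-xc t) (D t) : ℝ) ≤ ‖(-xc t)‖ * ‖D t‖ := real_inner_le_norm _ _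
        _ = ‖xc t‖ * ‖D t‖ := by rw [norm_neg]
    have hpsd := psd (xc t) (D t)
    have key : t * ‖D t‖ ^ 2 ≤ ‖xc t‖ * ‖D t‖ := by nlinarith
    rcases eq_or_lt_of_le (norm_nonneg (D t)) with h0 | h0
    · rw [← h0]; positivity
    · rw [le_div_iff₀ ht]
      nlinarith
  intro α α' hα hlt
  have hα' : (0:ℝ) < α' := hα.trans hlt
  set C := ‖xc α‖ with hC
  have key : ∀ x ∈ Icc α α', ‖xc x - xc α‖ ≤ C * (Real.log x - Real.log α) := by
    apply image_norm_le_of_norm_deriv_right_le_deriv_boundary'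
      (f' := D) (B := fun t => C * (Real.log t - Real.log α)) (B' := fun t => C / t)
    · intro t ht
      exact (((hderiv t (hα.trans_le ht.1)).sub_const (xc α)).continuousAt).continuousWithinAt
    · intro t ht
      exact ((hderiv t (hα.trans_le ht.1)).sub_const (xc α)).hasDerivWithinAt
    · simp
    · apply continuousOn_const.mul
      apply ContinuousOn.sub _ continuousOn_const
      exact Real.continuousOn_log.mono fun t ht => ne_of_gt (hα.trans_le ht.1)
    · intro t ht
      have htpos : 0 < t := hα.trans_le ht.1
      have : HasDerivAt (fun t => C * (Real.log t - Real.log α)) (C / t) t := by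
        have := ((Real.hasDerivAt_log (ne_of_gt htpos)).sub_const (Real.log α)).const_mul C
        simpa [div_eq_mul_inv] using this
      exact this.hasDerivWithinAt
    · intro t ht
      have htpos : 0 < t := hα.trans_le ht.1
      calc ‖D t‖ ≤ ‖xc t‖ / t := Dbound t htpos
        _ ≤ C / t := (div_le_div_iff_of_pos_right htpos).2 (mono α t hα ht.1)
  have := key α' ⟨le_of_lt hlt, le_rfl⟩
  rw [norm_sub_rev]
  calc ‖xc α' - xc α‖ ≤ C * (Real.log α' - Real.log α) := this
    _ = C * Real.log (α' / α) := by rw [Real.log_div (ne_of_gt hα') (ne_of_gt hα)]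
end

section
/- Let X be the convex hull of the candidate set, f : X → ℝ twice differentiable with minimizer x* of f over convex compact X ⊆ ℝ^d, and suppose (1/2)A ⪯ ∇²f(x) ⪯ 2A for all x ∈ X, where A is positive definite. If x_{t+1} ∈ X satisfies ⟨∇f(x_t), x_{t+1}⟩ + ‖x_{t+1} - x_t‖²_A ≤ min_{x ∈ X} { ⟨∇f(x_t), x⟩ + ‖x - x_t‖²_A } + φ/20, then the suboptimality Φ_t := f(x_t) - f(x*) satisfies Φ_{t+1} ≤ (15/16)Φ_t + φ/20. -/
open RealInnerProductSpace

private lemma quad_upper (g g₁ g₂ : ℝ → ℝ) (M : ℝ)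
    (hg : ∀ s, HasDerivAt g (g₁ s) s) (hg₁ : ∀ s, HasDerivAt g₁ (g₂ s) s)
    (hM : ∀ s ∈ Set.Icc (0:ℝ) 1, g₂ s ≤ M) :
    g 1 ≤ g 0 + g₁ 0 + M / 2 := by
  set ψ1 : ℝ → ℝ := fun s => g₁ s - g₁ 0 - M * s with hψ1
  have hψ1d : ∀ s, HasDerivAt ψ1 (g₂ s - M) s := by
    intro s
    have := ((hg₁ s).sub_const (g₁ 0)).sub ((hasDerivAt_id s).const_mul M)
    simp at this
    exact this
  have h1 : AntitoneOn ψ1 (Set.Icc 0 1) := by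
    apply antitoneOn_of_deriv_nonpos (convex_Icc 0 1)
    · exact fun s _ => ((hψ1d s).differentiableAt).continuousAt.continuousWithinAt
    · exact fun s _ => ((hψ1d s).differentiableAt).differentiableWithinAt
    · intro s hs
      rw [interior_Icc] at hs
      rw [(hψ1d s).deriv]
      have := hM s ⟨le_of_lt hs.1, le_of_lt hs.2⟩
      linarith
  have hψ1le : ∀ s ∈ Set.Icc (0:ℝ) 1, ψ1 s ≤ 0 := by
    intro s hs
    have := h1 (Set.left_mem_Icc.mpr zero_le_one) hs hs.1
    simpa [hψ1] using this
  set ψ : ℝ → ℝ := fun s => g s - g 0 - s * g₁ 0 - M * s ^ 2 / 2 with hψ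
  have hψd : ∀ s, HasDerivAt ψ (ψ1 s) s := by
    intro s
    have h2 : HasDerivAt (fun s : ℝ => M * s ^ 2 / 2) (M * s) s := by
      have := ((hasDerivAt_pow 2 s).const_mul M).div_const 2
      exact this.congr_deriv (by norm_num; ring)
    have := (((hg s).sub_const (g 0)).sub ((hasDerivAt_id s).mul_const (g₁ 0))).sub h2
    simp at this
    exact this
  have h2 : AntitoneOn ψ (Set.Icc 0 1) := by
    apply antitoneOn_of_deriv_nonpos (convex_Icc 0 1)
    · exact fun s _ => ((hψd s).differentiableAt).continuousAt.continuousWithinAt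
    · exact fun s _ => ((hψd s).differentiableAt).differentiableWithinAt
    · intro s hs
      rw [interior_Icc] at hs
      rw [(hψd s).deriv]
      exact hψ1le s ⟨le_of_lt hs.1, le_of_lt hs.2⟩
  have := h2 (Set.left_mem_Icc.mpr zero_le_one) (Set.right_mem_Icc.mpr zero_le_one) zero_le_one
  simp only [hψ] at this
  nlinarith [this]

private lemma quad_lower (g g₁ g₂ : ℝ → ℝ) (m : ℝ)
    (hg : ∀ s, HasDerivAt g (g₁ s) s) (hg₁ : ∀ s, HasDerivAt g₁ (g₂ s) s)
    (hm : ∀ s ∈ Set.Icc (0:ℝ) 1, m ≤ g₂ s) :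
    g 0 + g₁ 0 + m / 2 ≤ g 1 := by
  have := quad_upper (fun s => -g s) (fun s => -g₁ s) (fun s => -g₂ s) (-m)
    (fun s => (hg s).neg) (fun s => (hg₁ s).neg) (fun s hs => by simpa using hm s hs)
  linarith

private lemma line_derivs {d : ℕ} (f : EuclideanSpace ℝ (Fin d) → ℝ) (hf : ContDiff ℝ 2 f)
    (x v : EuclideanSpace ℝ (Fin d)) :
    (∀ s : ℝ, HasDerivAt (fun s : ℝ => f (x + s • v)) (⟪gradient f (x + s • v), v⟫) s) ∧
    (∀ s : ℝ, HasDerivAt (fun s : ℝ => ⟪gradient f (x + s • v), v⟫)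
      (⟪(fderiv ℝ (gradient f) (x + s • v)) v, v⟫) s) := by
  have hline : ∀ s : ℝ, HasDerivAt (fun s : ℝ => x + s • v) v s := fun s => by
    simpa using ((hasDerivAt_id s).smul_const v).const_add x
  have hfd : Differentiable ℝ f := hf.differentiable (by norm_num)
  have hfapply : ∀ y w, fderiv ℝ f y w = ⟪gradient f y, w⟫ := by
    intro y w
    rw [gradient, InnerProductSpace.toDual_symm_apply]
  have hgraddiff : Differentiable ℝ (gradient f) := by
    have h1 : ContDiff ℝ 1 (fun y => fderiv ℝ f y) := hf.fderiv_right (by norm_num)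
    have h2 := ((InnerProductSpace.toDual ℝ
      (EuclideanSpace ℝ (Fin d))).symm.toContinuousLinearEquiv.toContinuousLinearMap).differentiable.comp
      (h1.differentiable (by norm_num))
    exact h2
  constructor
  · intro s
    have := (hfd (x + s • v)).hasFDerivAt.comp_hasDerivAt s (hline s)
    rw [← hfapply]
    exact this
  · intro s
    have h3 := (hgraddiff (x + s • v)).hasFDerivAt.comp_hasDerivAt s (hline s)
    have h4 := ((innerSL ℝ v).hasFDerivAt.comp_hasDerivAt s h3)
    simp only [innerSL_apply_apply] at h4
    have : ∀ w, ⟪v, w⟫ = ⟪w, v⟫ := fun w => real_inner_comm w v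
    have e : (fun s : ℝ => ⟪gradient f (x + s • v), v⟫) =
        (fun w => ⟪v, w⟫) ∘ gradient f ∘ (fun s => x + s • v) := by
      funext t; exact real_inner_comm _ _
    rw [e, real_inner_comm]
    exact h4

/-- One step of the approximate Newton method under Hessian stability: if
`(1/2)A ⪯ ∇²f(x) ⪯ 2A` on a convex compact set `X` with minimizer `x*` of `f` on `X`,
and `x_{t+1} ∈ X` minimizes `⟨∇f(x_t), x⟩ + ‖x - x_t‖²_A` over `X` up to `φ/20`, then
`f(x_{t+1}) - f(x*) ≤ (15/16)(f(x_t) - f(x*)) + φ/20`. -/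
theorem approx_newton_step {d : ℕ} (X : Set (EuclideanSpace ℝ (Fin d)))
    (hXconv : Convex ℝ X) (hXcomp : IsCompact X)
    (f : EuclideanSpace ℝ (Fin d) → ℝ) (hf : ContDiff ℝ 2 f)
    (A : EuclideanSpace ℝ (Fin d) →L[ℝ] EuclideanSpace ℝ (Fin d))
    (hAsa : IsSelfAdjoint A) (hApos : ∀ v, v ≠ 0 → 0 < ⟪A v, v⟫)
    (hhess : ∀ x ∈ X, ∀ v : EuclideanSpace ℝ (Fin d),
      (1 / 2) * ⟪A v, v⟫ ≤ ⟪(fderiv ℝ (gradient f) x) v, v⟫ ∧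
      ⟪(fderiv ℝ (gradient f) x) v, v⟫ ≤ 2 * ⟪A v, v⟫)
    (xs : EuclideanSpace ℝ (Fin d)) (hxs : xs ∈ X) (hxsmin : ∀ y ∈ X, f xs ≤ f y)
    (xt xt1 : EuclideanSpace ℝ (Fin d)) (hxt : xt ∈ X) (hxt1 : xt1 ∈ X)
    (φ : ℝ) (hφ : 0 < φ)
    (hstep : ∀ x ∈ X,
      ⟪gradient f xt, xt1⟫ + ⟪A (xt1 - xt), xt1 - xt⟫ ≤
        ⟪gradient f xt, x⟫ + ⟪A (x - xt), x - xt⟫ + φ / 20) :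
    f xt1 - f xs ≤ (15 / 16) * (f xt - f xs) + φ / 20 := by
  set v1 := xt1 - xt with hv1
  set w := xs - xt with hw
  set g := gradient f xt with hgdef
  have hmem1 : ∀ s ∈ Set.Icc (0:ℝ) 1, xt + s • v1 ∈ X := by
    intro s hs
    have h : xt + s • v1 = (1 - s) • xt + s • xt1 := by
      rw [hv1]; module
    rw [h]
    exact hXconv hxt hxt1 (by linarith [hs.2]) hs.1 (by ring)
  have hmem2 : ∀ s ∈ Set.Icc (0:ℝ) 1, xt + s • w ∈ X := by
    intro s hs
    have h : xt + s • w = (1 - s) • xt + s • xs := by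
      rw [hw]; module
    rw [h]
    exact hXconv hxt hxs (by linarith [hs.2]) hs.1 (by ring)
  obtain ⟨hd1, hd2⟩ := line_derivs f hf xt v1
  have hub := quad_upper _ _ _ (2 * ⟪A v1, v1⟫) hd1 hd2
    (fun s hs => (hhess _ (hmem1 s hs) v1).2)
  obtain ⟨he1, he2⟩ := line_derivs f hf xt w
  have hlb := quad_lower _ _ _ ((1 / 2) * ⟪A w, w⟫) he1 he2
    (fun s hs => (hhess _ (hmem2 s hs) w).1)
  simp only [one_smul, zero_smul, add_zero] at hub hlb
  have hxtv1 : xt + v1 = xt1 := by rw [hv1]; abel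
  have hxtw : xt + w = xs := by rw [hw]; abel
  rw [hxtv1] at hub
  rw [hxtw] at hlb
  have hx0 : xt + (4⁻¹:ℝ) • w ∈ X := hmem2 _ (by norm_num)
  have hs0 := hstep _ hx0
  have e2 : (xt + (4⁻¹:ℝ) • w) - xt = (4⁻¹:ℝ) • w := add_sub_cancel_left xt _
  rw [e2] at hs0
  have e3 : ⟪A ((4⁻¹:ℝ) • w), (4⁻¹:ℝ) • w⟫ = 4⁻¹ * (4⁻¹ * ⟪A w, w⟫) := by
    rw [map_smul, real_inner_smul_left, real_inner_smul_right]
  have e1 : ⟪g, xt + (4⁻¹:ℝ) • w⟫ = ⟪g, xt⟫ + 4⁻¹ * ⟪g, w⟫ := by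
    rw [inner_add_right, real_inner_smul_right]
  have e4 : ⟪g, xt1⟫ = ⟪g, xt⟫ + ⟪g, v1⟫ := by
    rw [← inner_add_right, hxtv1]
  rw [e3, e1, e4] at hs0
  have hΦ : f xs ≤ f xt := hxsmin xt hxt
  linarith [hub, hlb, hs0, hΦ]
end
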